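/- arXiv:1603.07866 — 5 statements merged into one kernel-verified Lean document; each statement's English description precedes it below -/
import Mathlib

section
/- Let n, T be positive integers, X a real n×T matrix and r ∈ ℝ^T. For γ > 0 set Q̃_γ = (T⁻¹XᵀX + γ I_T)⁻¹. Then lim_{γ→0⁺} γ · T⁻¹ rᵀ Q̃_γ r = T⁻¹ · inf_{ω ∈ ℝⁿ} ‖r − Xᵀω‖², the per-input least-squares training mean-square error. (Lemma 'Training MSE and resolvent'.) -/
open Matrix Filter Topology

section aux

variable {n T : ℕ}

/-- transpose-swap for dot products through `Xᵀ`. -/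
lemma dot_transpose_mulVec (X : Matrix (Fin n) (Fin T) ℝ) (u : Fin T → ℝ) (e : Fin n → ℝ) :
    u ⬝ᵥ (Xᵀ *ᵥ e) = (X *ᵥ u) ⬝ᵥ e := by
  rw [dotProduct_mulVec, vecMul_transpose]

lemma dot_B' (X : Matrix (Fin n) (Fin T) ℝ) (v w : Fin T → ℝ) :
    v ⬝ᵥ ((Xᵀ * X) *ᵥ w) = (X *ᵥ v) ⬝ᵥ (X *ᵥ w) := by
  rw [← mulVec_mulVec, dot_transpose_mulVec]

/-- Cauchy–Schwarz for the dot product. -/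
lemma dot_sq_le (a b : Fin T → ℝ) : (a ⬝ᵥ b) ^ 2 ≤ (a ⬝ᵥ a) * (b ⬝ᵥ b) := by
  simpa [dotProduct, mul_pow, ← sq] using
    Finset.sum_mul_sq_le_sq_mul_sq Finset.univ a b

lemma dot_self_nonneg (v : Fin T → ℝ) : 0 ≤ v ⬝ᵥ v := by
  simpa using dotProduct_self_star_nonneg v

lemma dot_self_pos {v : Fin T → ℝ} (hv : v ≠ 0) : 0 < v ⬝ᵥ v := by
  have := (Matrix.dotProduct_self_star_pos_iff (v := v)).2 hv
  simpa using this

end aux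

/-- **Training MSE and resolvent.**
Let `X` be a real `n × T` matrix and `r ∈ ℝ^T`.  For `γ > 0` set
`Q̃_γ = (T⁻¹ Xᵀ X + γ I_T)⁻¹`.  Then
`lim_{γ → 0⁺} γ · T⁻¹ rᵀ Q̃_γ r = T⁻¹ · inf_{ω ∈ ℝⁿ} ‖r − Xᵀ ω‖²`,
the per-input least-squares training mean-square error.  (Squared Euclidean
norms are written via the dot product: `‖v‖² = v ⬝ᵥ v`.) -/
theorem training_mse_resolvent_limit
    (n T : ℕ) (hn : 0 < n) (hT : 0 < T)
    (X : Matrix (Fin n) (Fin T) ℝ) (r : Fin T → ℝ) :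
    Tendsto
      (fun γ : ℝ =>
        γ * ((T : ℝ)⁻¹ *
          (r ⬝ᵥ (((T : ℝ)⁻¹ • (Xᵀ * X) + γ • (1 : Matrix (Fin T) (Fin T) ℝ))⁻¹ *ᵥ r))))
      (𝓝[>] (0 : ℝ))
      (𝓝 ((T : ℝ)⁻¹ *
        ⨅ ω : Fin n → ℝ, (r - Xᵀ *ᵥ ω) ⬝ᵥ (r - Xᵀ *ᵥ ω))) := by
  have hT0 : (0:ℝ) < (T:ℝ) := by exact_mod_cast hT
  have hTinv : (0:ℝ) < (T:ℝ)⁻¹ := by positivity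
  set B' : Matrix (Fin T) (Fin T) ℝ := (T : ℝ)⁻¹ • (Xᵀ * X) with hB'
  have hdotB' : ∀ v w : Fin T → ℝ,
      v ⬝ᵥ (B' *ᵥ w) = (T:ℝ)⁻¹ * ((X *ᵥ v) ⬝ᵥ (X *ᵥ w)) := by
    intro v w
    rw [hB', smul_mulVec, dotProduct_smul, dot_B']
    rfl
  have hB'symm : B'ᵀ = B' := by
    rw [hB', transpose_smul, transpose_mul, transpose_transpose]
  -- positive definiteness of M γ for γ > 0
  set M : ℝ → Matrix (Fin T) (Fin T) ℝ := fun γ => B' + γ • 1 with hM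
  have hMposdef : ∀ γ : ℝ, 0 < γ → (M γ).PosDef := by
    intro γ hγ
    rw [posDef_iff_dotProduct_mulVec]
    constructor
    · show (M γ)ᴴ = M γ
      have : (M γ)ᵀ = M γ := by
        rw [hM]; simp [transpose_add, hB'symm, transpose_smul]
      simpa [Matrix.IsHermitian, conjTranspose_eq_transpose_of_trivial] using this
    · intro x hx
      have hx2 : 0 < x ⬝ᵥ x := dot_self_pos hx
      have : x ⬝ᵥ ((M γ) *ᵥ x) = (T:ℝ)⁻¹ * ((X *ᵥ x) ⬝ᵥ (X *ᵥ x)) + γ * (x ⬝ᵥ x) := by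
        rw [hM]
        simp only [add_mulVec, dotProduct_add, hdotB', smul_mulVec, one_mulVec,
          dotProduct_smul, smul_eq_mul]
      have hps : (0:ℝ) ≤ (X *ᵥ x) ⬝ᵥ (X *ᵥ x) := dot_self_nonneg _
      show 0 < star x ⬝ᵥ ((M γ) *ᵥ x)
      simp only [star_trivial]
      rw [this]
      have := mul_pos hγ hx2
      positivity
  -- decomposition r = u + B' *ᵥ z with u in kernel
  obtain ⟨u, z, hu, hr⟩ : ∃ u z : Fin T → ℝ, B' *ᵥ u = 0 ∧ r = u + B' *ᵥ z := by
    set f := Matrix.mulVecLin B' with hf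
    have hdisj : LinearMap.ker f ⊓ LinearMap.range f = ⊥ := by
      rw [eq_bot_iff]
      rintro v ⟨hv1, hv2⟩
      obtain ⟨zz, hzz⟩ := hv2
      have hv0 : B' *ᵥ v = 0 := hv1
      have hvz : v = B' *ᵥ zz := by rw [← hzz]; rfl
      have hvv : v ⬝ᵥ v = 0 := by
        conv_lhs => rw [hvz]
        rw [dotProduct_mulVec, ← Matrix.mulVec_transpose, hB'symm, ← hvz, hv0,
          zero_dotProduct]
      simpa using (dotProduct_self_eq_zero).1 hvv
    have hsup : LinearMap.ker f ⊔ LinearMap.range f = ⊤ := by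
      apply Submodule.eq_top_of_finrank_eq
      have h1 := Submodule.finrank_sup_add_finrank_inf_eq (LinearMap.ker f) (LinearMap.range f)
      rw [hdisj] at h1
      have h2 := LinearMap.finrank_range_add_finrank_ker f
      simp only [finrank_bot, add_zero] at h1
      omega
    have hrmem : r ∈ LinearMap.ker f ⊔ LinearMap.range f := by rw [hsup]; trivial
    obtain ⟨u, huk, w, hwr, huw⟩ := Submodule.mem_sup.1 hrmem
    obtain ⟨z, hz⟩ := hwr
    exact ⟨u, z, huk, by rw [← huw, ← hz]; rfl⟩
  have hXu : X *ᵥ u = 0 := by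
    have h0 : u ⬝ᵥ (B' *ᵥ u) = 0 := by rw [hu, dotProduct_zero]
    rw [hdotB'] at h0
    have h1 : (X *ᵥ u) ⬝ᵥ (X *ᵥ u) = 0 := by
      rcases mul_eq_zero.mp h0 with h | h
      · exact absurd h (ne_of_gt hTinv)
      · exact h
    exact (dotProduct_self_eq_zero).1 h1
  have hru : r ⬝ᵥ u = u ⬝ᵥ u := by
    rw [hr, add_dotProduct]
    have : (B' *ᵥ z) ⬝ᵥ u = 0 := by
      rw [dotProduct_comm, hdotB', hXu, zero_dotProduct, mul_zero]
    rw [this, add_zero]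
  -- the infimum equals u ⬝ᵥ u
  have hinf : (⨅ ω : Fin n → ℝ, (r - Xᵀ *ᵥ ω) ⬝ᵥ (r - Xᵀ *ᵥ ω)) = u ⬝ᵥ u := by
    set c : Fin n → ℝ := (T:ℝ)⁻¹ • (X *ᵥ z) with hc
    have hBz : B' *ᵥ z = Xᵀ *ᵥ c := by
      rw [hB', smul_mulVec, ← mulVec_mulVec, mulVec_smul]
    have hval : ∀ ω, (r - Xᵀ *ᵥ ω) ⬝ᵥ (r - Xᵀ *ᵥ ω)
        = u ⬝ᵥ u + (Xᵀ *ᵥ (c - ω)) ⬝ᵥ (Xᵀ *ᵥ (c - ω)) := by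
      intro ω
      have h1 : r - Xᵀ *ᵥ ω = u + Xᵀ *ᵥ (c - ω) := by
        rw [hr, hBz, mulVec_sub]; abel
      rw [h1]
      have h2 : u ⬝ᵥ (Xᵀ *ᵥ (c - ω)) = 0 := by
        rw [dot_transpose_mulVec, hXu, zero_dotProduct]
      have h3 : (Xᵀ *ᵥ (c - ω)) ⬝ᵥ u = 0 := by rw [dotProduct_comm]; exact h2
      rw [dotProduct_add, add_dotProduct, add_dotProduct, h2, h3, add_zero, zero_add]
    have hbdd : BddBelow (Set.range fun ω : Fin n → ℝ => (r - Xᵀ *ᵥ ω) ⬝ᵥ (r - Xᵀ *ᵥ ω)) := by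
      refine ⟨u ⬝ᵥ u, ?_⟩
      rintro x ⟨ω, rfl⟩
      simp only [hval]
      have := dot_self_nonneg (Xᵀ *ᵥ (c - ω))
      linarith
    apply le_antisymm
    · have hle := ciInf_le hbdd c
      simpa [hval c, sub_self, mulVec_zero, dotProduct_zero] using hle
    · apply le_ciInf
      intro ω
      simp only [hval]
      have := dot_self_nonneg (Xᵀ *ᵥ (c - ω))
      linarith
  rw [hinf]
  -- notation for the resolvent applied to z
  set y : ℝ → (Fin T → ℝ) := fun γ => (B' + γ • 1)⁻¹ *ᵥ z with hy
  set C : ℝ := Real.sqrt ((r ⬝ᵥ r) * (z ⬝ᵥ z)) with hC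
  have hCnn : 0 ≤ C := Real.sqrt_nonneg _
  -- the resolvent identity for γ > 0
  have hident : ∀ γ : ℝ, 0 < γ →
      γ * ((T : ℝ)⁻¹ * (r ⬝ᵥ ((B' + γ • 1)⁻¹ *ᵥ r)))
      = (T:ℝ)⁻¹ * (u ⬝ᵥ u) +
        ((T:ℝ)⁻¹ * γ * (r ⬝ᵥ z) - (T:ℝ)⁻¹ * γ^2 * (r ⬝ᵥ y γ)) := by
    intro γ hγ
    have hpd : (B' + γ • 1).PosDef := hMposdef γ hγ
    have hdet : IsUnit (B' + γ • 1).det := hpd.det_pos.ne'.isUnit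
    have hinj : Function.Injective ((B' + γ • 1).mulVec) :=
      mulVec_injective_iff_isUnit.2 hpd.isUnit
    have hMinv : ∀ v : Fin T → ℝ, (B' + γ • 1) *ᵥ ((B' + γ • 1)⁻¹ *ᵥ v) = v := by
      intro v
      rw [mulVec_mulVec, Matrix.mul_nonsing_inv _ hdet, one_mulVec]
    have hMv : ∀ v : Fin T → ℝ, (B' + γ • 1) *ᵥ v = B' *ᵥ v + γ • v := by
      intro v
      rw [add_mulVec, smul_mulVec γ (1 : Matrix (Fin T) (Fin T) ℝ) v, one_mulVec]
    have key : (B' + γ • 1)⁻¹ *ᵥ r = γ⁻¹ • u + z - γ • y γ := by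
      apply hinj
      rw [hMinv r]
      rw [mulVec_sub, mulVec_add, mulVec_smul, mulVec_smul, hMinv z, hMv, hMv, hu, zero_add,
        smul_smul, inv_mul_cancel₀ hγ.ne', one_smul, hr]
      abel
    rw [key]
    rw [dotProduct_sub, dotProduct_add, dotProduct_smul, dotProduct_smul, hru]
    have hγ' : γ * γ⁻¹ = 1 := mul_inv_cancel₀ hγ.ne'
    field_simp
    linear_combination (u ⬝ᵥ u) * hγ'
  have hrr : 0 ≤ r ⬝ᵥ r := dot_self_nonneg r
  have hzz : 0 ≤ z ⬝ᵥ z := dot_self_nonneg z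
  have hC2 : C ^ 2 = (r ⬝ᵥ r) * (z ⬝ᵥ z) := Real.sq_sqrt (by positivity)
  -- bound on the remainder term
  have hbound : ∀ γ : ℝ, 0 < γ →
      |(T:ℝ)⁻¹ * γ^2 * (r ⬝ᵥ y γ)| ≤ γ * ((T:ℝ)⁻¹ * C) := by
    intro γ hγ
    have hpd : (B' + γ • 1).PosDef := hMposdef γ hγ
    have hdet : IsUnit (B' + γ • 1).det := hpd.det_pos.ne'.isUnit
    have hMyz : (B' + γ • 1) *ᵥ y γ = z := by
      rw [hy]
      rw [mulVec_mulVec, Matrix.mul_nonsing_inv _ hdet, one_mulVec]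
    have hyy : 0 ≤ y γ ⬝ᵥ y γ := dot_self_nonneg _
    have h1 : γ * (y γ ⬝ᵥ y γ) ≤ z ⬝ᵥ y γ := by
      have hexp : z ⬝ᵥ y γ
          = (T:ℝ)⁻¹ * ((X *ᵥ y γ) ⬝ᵥ (X *ᵥ y γ)) + γ * (y γ ⬝ᵥ y γ) := by
        conv_lhs => rw [← hMyz]
        rw [add_mulVec, smul_mulVec γ (1 : Matrix (Fin T) (Fin T) ℝ) (y γ), one_mulVec,
          add_dotProduct, dotProduct_comm (B' *ᵥ y γ) (y γ), hdotB', smul_dotProduct,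
          smul_eq_mul]
      rw [hexp]
      have := dot_self_nonneg (X *ᵥ y γ)
      nlinarith
    have h2 : γ^2 * (y γ ⬝ᵥ y γ) ≤ z ⬝ᵥ z := by
      have hcs := dot_sq_le z (y γ)
      rcases eq_or_lt_of_le hyy with h0 | h0
      · rw [← h0, mul_zero]; exact hzz
      · have hzy : 0 ≤ z ⬝ᵥ y γ := le_trans (by positivity) h1
        have hsq1 : (γ * (y γ ⬝ᵥ y γ))^2 ≤ (z ⬝ᵥ y γ)^2 := by
          apply sq_le_sq' _ h1
          have : 0 ≤ γ * (y γ ⬝ᵥ y γ) := by positivity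
          linarith
        nlinarith [hsq1, hcs, h0]
    have h3 : (r ⬝ᵥ y γ)^2 ≤ (r ⬝ᵥ r) * (y γ ⬝ᵥ y γ) := dot_sq_le r (y γ)
    have e4 : γ^4 * (r ⬝ᵥ y γ)^2 ≤ γ^2 * ((r ⬝ᵥ r) * (z ⬝ᵥ z)) := by
      nlinarith [mul_le_mul_of_nonneg_left h3 (by positivity : (0:ℝ) ≤ γ^4),
        mul_le_mul_of_nonneg_left h2 (by positivity : (0:ℝ) ≤ γ^2 * (r ⬝ᵥ r))]
    have hsq : ((T:ℝ)⁻¹ * γ^2 * (r ⬝ᵥ y γ))^2 ≤ (γ * ((T:ℝ)⁻¹ * C))^2 := by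
      have e5 := mul_le_mul_of_nonneg_left e4 (sq_nonneg ((T:ℝ)⁻¹))
      calc ((T:ℝ)⁻¹ * γ^2 * (r ⬝ᵥ y γ))^2
          = ((T:ℝ)⁻¹)^2 * (γ^4 * (r ⬝ᵥ y γ)^2) := by ring
        _ ≤ ((T:ℝ)⁻¹)^2 * (γ^2 * ((r ⬝ᵥ r) * (z ⬝ᵥ z))) := e5
        _ = (γ * ((T:ℝ)⁻¹ * C))^2 := by rw [mul_pow, mul_pow, hC2]; ring
    calc |(T:ℝ)⁻¹ * γ^2 * (r ⬝ᵥ y γ)|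
        = Real.sqrt (((T:ℝ)⁻¹ * γ^2 * (r ⬝ᵥ y γ))^2) := (Real.sqrt_sq_eq_abs _).symm
      _ ≤ Real.sqrt ((γ * ((T:ℝ)⁻¹ * C))^2) := Real.sqrt_le_sqrt hsq
      _ = γ * ((T:ℝ)⁻¹ * C) := Real.sqrt_sq (by positivity)
  -- assembling the limit
  have heq : (fun γ : ℝ => γ * ((T : ℝ)⁻¹ * (r ⬝ᵥ ((B' + γ • 1)⁻¹ *ᵥ r))))
      =ᶠ[𝓝[>] (0:ℝ)]
      (fun γ : ℝ => (T:ℝ)⁻¹ * (u ⬝ᵥ u) +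
        ((T:ℝ)⁻¹ * γ * (r ⬝ᵥ z) - (T:ℝ)⁻¹ * γ^2 * (r ⬝ᵥ y γ))) := by
    filter_upwards [self_mem_nhdsWithin] with γ hγ
    exact hident γ hγ
  have h0 : Tendsto (fun γ : ℝ =>
      (T:ℝ)⁻¹ * γ * (r ⬝ᵥ z) - (T:ℝ)⁻¹ * γ^2 * (r ⬝ᵥ y γ)) (𝓝[>] (0:ℝ)) (𝓝 0) := by
    have ha : Tendsto (fun γ : ℝ => (T:ℝ)⁻¹ * γ * (r ⬝ᵥ z)) (𝓝[>] (0:ℝ)) (𝓝 0) := by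
      have h : Tendsto (fun γ : ℝ => (T:ℝ)⁻¹ * γ * (r ⬝ᵥ z)) (𝓝 (0:ℝ))
          (𝓝 ((T:ℝ)⁻¹ * 0 * (r ⬝ᵥ z))) := by
        exact ((continuous_const.mul continuous_id).mul continuous_const).tendsto 0
      simpa using h.mono_left nhdsWithin_le_nhds
    have hb : Tendsto (fun γ : ℝ => (T:ℝ)⁻¹ * γ^2 * (r ⬝ᵥ y γ)) (𝓝[>] (0:ℝ)) (𝓝 0) := by
      have hgt : Tendsto (fun γ : ℝ => γ * ((T:ℝ)⁻¹ * C)) (𝓝[>] (0:ℝ)) (𝓝 0) := by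
        have h : Tendsto (fun γ : ℝ => γ * ((T:ℝ)⁻¹ * C)) (𝓝 (0:ℝ))
            (𝓝 (0 * ((T:ℝ)⁻¹ * C))) := (continuous_id.mul continuous_const).tendsto 0
        simpa using h.mono_left nhdsWithin_le_nhds
      apply squeeze_zero_norm' ?_ hgt
      filter_upwards [self_mem_nhdsWithin] with γ hγ
      rw [Real.norm_eq_abs]
      exact hbound γ hγ
    simpa using ha.sub hb
  have hG := (tendsto_const_nhds (x := (T:ℝ)⁻¹ * (u ⬝ᵥ u)) (f := 𝓝[>] (0:ℝ))).add h0
  rw [add_zero] at hG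
  exact Tendsto.congr' heq.symm hG
end

section
/- Let n, T be positive integers with T > n, X a real n×T matrix such that XXᵀ is invertible, r ∈ ℝ^T, and ω = (XXᵀ)⁻¹ X r the least-squares readout. For γ > 0 set Q̃_γ = (T⁻¹XᵀX + γ I_T)⁻¹. Then T⁻¹‖r − Xᵀω‖² = lim_{γ→0⁺} γ · T⁻¹ rᵀ Q̃_γ r. -/
open Matrix Filter Topology

private lemma woodbury_aux {n T : ℕ} (hT : (T:ℝ) ≠ 0) (γ : ℝ)
    (X : Matrix (Fin n) (Fin T) ℝ) (B : Matrix (Fin n) (Fin n) ℝ)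
    (hMB : X * Xᵀ * B⁻¹ = 1 - (γ * T) • B⁻¹) :
    ((T : ℝ)⁻¹ • (Xᵀ * X) + γ • (1 : Matrix (Fin T) (Fin T) ℝ)) *
      (1 - Xᵀ * B⁻¹ * X) = γ • 1 := by
  have h1 : (Xᵀ * X) * (Xᵀ * B⁻¹ * X) = Xᵀ * (X * Xᵀ * B⁻¹) * X := by
    simp only [Matrix.mul_assoc]
  rw [hMB] at h1
  have h2 : Xᵀ * (1 - (γ * T) • B⁻¹) * X = Xᵀ * X - (γ * T) • (Xᵀ * B⁻¹ * X) := by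
    rw [Matrix.mul_sub, Matrix.sub_mul, Matrix.mul_one, Matrix.mul_smul, Matrix.smul_mul]
  rw [h2] at h1
  rw [Matrix.add_mul, Matrix.mul_sub, Matrix.mul_sub, Matrix.mul_one, Matrix.mul_one,
    Matrix.smul_mul, Matrix.smul_mul, Matrix.one_mul, h1, smul_sub, smul_smul]
  have h3 : (T:ℝ)⁻¹ * (γ * T) = γ := by field_simp
  rw [h3]
  abel

/-- For `T > n`, `X ∈ ℝ^{n×T}` with `X Xᵀ` invertible, `r ∈ ℝ^T` and the
least-squares readout `ω = (X Xᵀ)⁻¹ X r`, the training mean-square error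
satisfies `T⁻¹ ‖r − Xᵀ ω‖² = lim_{γ → 0⁺} γ · T⁻¹ rᵀ Q̃_γ r` where
`Q̃_γ = (T⁻¹ Xᵀ X + γ I_T)⁻¹`.  (Squared Euclidean norms are written via the
dot product: `‖v‖² = v ⬝ᵥ v`.) -/
theorem training_mse_eq_resolvent_limit_of_lt
    (n T : ℕ) (hn : 0 < n) (hnT : n < T)
    (X : Matrix (Fin n) (Fin T) ℝ) (hX : IsUnit (X * Xᵀ))
    (r : Fin T → ℝ)
    (ω : Fin n → ℝ) (hω : ω = (X * Xᵀ)⁻¹ *ᵥ (X *ᵥ r)) :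
    Tendsto
      (fun γ : ℝ =>
        γ * ((T : ℝ)⁻¹ *
          (r ⬝ᵥ (((T : ℝ)⁻¹ • (Xᵀ * X) + γ • (1 : Matrix (Fin T) (Fin T) ℝ))⁻¹ *ᵥ r))))
      (𝓝[>] (0 : ℝ))
      (𝓝 ((T : ℝ)⁻¹ * ((r - Xᵀ *ᵥ ω) ⬝ᵥ (r - Xᵀ *ᵥ ω)))) := by
  have hT0 : 0 < T := lt_trans hn hnT
  have hT : (T : ℝ) ≠ 0 := Nat.cast_ne_zero.mpr hT0.ne'
  set M : Matrix (Fin n) (Fin n) ℝ := X * Xᵀ with hMdef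
  set s : Fin n → ℝ := X *ᵥ r with hsdef
  have hMps : M.PosSemidef := by
    have := posSemidef_self_mul_conjTranspose X
    rwa [conjTranspose_eq_transpose_of_trivial] at this
  -- B γ and its invertibility for γ > 0
  set B : ℝ → Matrix (Fin n) (Fin n) ℝ := fun γ => (γ * T) • 1 + M with hBdef
  have hBpd : ∀ γ : ℝ, 0 < γ → (B γ).PosDef := by
    intro γ hγ
    have : Nonempty (Fin n) := ⟨⟨0, hn⟩⟩
    have h1 : ((γ * T) • (1 : Matrix (Fin n) (Fin n) ℝ)) = diagonal (fun _ => γ * T) := by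
      rw [smul_one_eq_diagonal]
    show ((γ * T) • (1 : Matrix (Fin n) (Fin n) ℝ) + M).PosDef
    rw [h1]
    refine (Matrix.posDef_diagonal_iff.mpr (fun _ => ?_)).add_posSemidef hMps
    have : (0:ℝ) < (T:ℝ) := Nat.cast_pos.mpr hT0
    positivity
  -- the continuous surrogate function
  set g : ℝ → ℝ := fun γ =>
    (T : ℝ)⁻¹ * (r ⬝ᵥ r - r ⬝ᵥ (Xᵀ *ᵥ ((B γ)⁻¹ *ᵥ s))) with hgdef
  -- eventual equality on (0, ∞)
  have heq : ∀ γ : ℝ, 0 < γ →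
      γ * ((T : ℝ)⁻¹ *
        (r ⬝ᵥ (((T : ℝ)⁻¹ • (Xᵀ * X) + γ • (1 : Matrix (Fin T) (Fin T) ℝ))⁻¹ *ᵥ r))) = g γ := by
    intro γ hγ
    have hBu : IsUnit (B γ) := (hBpd γ hγ).isUnit
    have hBdet : IsUnit (B γ).det := (Matrix.isUnit_iff_isUnit_det _).mp hBu
    have hBB : B γ * (B γ)⁻¹ = 1 := Matrix.mul_nonsing_inv _ hBdet
    have hMB : M * (B γ)⁻¹ = 1 - (γ * T) • (B γ)⁻¹ := by
      have : B γ * (B γ)⁻¹ = (γ * T) • (B γ)⁻¹ + M * (B γ)⁻¹ := by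
        rw [hBdef]; rw [Matrix.add_mul, Matrix.smul_mul, Matrix.one_mul]
      rw [hBB] at this
      linear_combination (norm := abel) this.symm
    have hkey : ((T : ℝ)⁻¹ • (Xᵀ * X) + γ • (1 : Matrix (Fin T) (Fin T) ℝ)) *
        (1 - Xᵀ * (B γ)⁻¹ * X) = γ • 1 := woodbury_aux hT γ X _ hMB
    set A : Matrix (Fin T) (Fin T) ℝ := (T : ℝ)⁻¹ • (Xᵀ * X) + γ • 1 with hAdef
    have hinv : A⁻¹ = γ⁻¹ • (1 - Xᵀ * (B γ)⁻¹ * X) := by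
      apply Matrix.inv_eq_right_inv
      rw [Matrix.mul_smul, hkey, smul_smul, inv_mul_cancel₀ hγ.ne', one_smul]
    rw [hinv]
    have hmv : (γ⁻¹ • (1 - Xᵀ * (B γ)⁻¹ * X)) *ᵥ r
        = γ⁻¹ • (r - Xᵀ *ᵥ ((B γ)⁻¹ *ᵥ s)) := by
      rw [Matrix.smul_mulVec, Matrix.sub_mulVec, Matrix.one_mulVec,
        hsdef, ← Matrix.mulVec_mulVec, ← Matrix.mulVec_mulVec]
    rw [hmv, dotProduct_smul, smul_eq_mul, hgdef]
    rw [dotProduct_sub]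
    field_simp
  -- continuity of g at 0 within the relevant set
  have hB0 : B 0 = M := by rw [hBdef]; simp
  have hMdet : (M.det : ℝ) ≠ 0 := by
    have := (Matrix.isUnit_iff_isUnit_det _).mp hX
    exact this.ne_zero
  have hcontB : Continuous B := by
    apply Continuous.add _ continuous_const
    exact (continuous_id.mul continuous_const).smul continuous_const
  have hinvcont : ContinuousAt (fun γ => (B γ)⁻¹) 0 := by
    apply ContinuousAt.comp _ hcontB.continuousAt
    apply continuousAt_matrix_inv
    rw [hB0]
    have : (Ring.inverse : ℝ → ℝ) = Inv.inv := by
      funext x; exact Ring.inverse_eq_inv x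
    rw [this]
    exact continuousAt_inv₀ hMdet
  have hgcont : ContinuousAt g 0 := by
    rw [hgdef]
    refine ContinuousAt.mul continuousAt_const ?_
    refine ContinuousAt.sub continuousAt_const ?_
    have h2 : Continuous (fun A : Matrix (Fin n) (Fin n) ℝ =>
        r ⬝ᵥ (Xᵀ *ᵥ (A *ᵥ s))) := by
      refine Continuous.dotProduct continuous_const ?_
      exact Continuous.matrix_mulVec continuous_const
        (Continuous.matrix_mulVec continuous_id continuous_const)
    exact h2.continuousAt.comp hinvcont
  -- value at 0
  have hg0 : g 0 = (T : ℝ)⁻¹ * ((r - Xᵀ *ᵥ ω) ⬝ᵥ (r - Xᵀ *ᵥ ω)) := by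
    have hMM : M * M⁻¹ = 1 := Matrix.mul_nonsing_inv _ ((Matrix.isUnit_iff_isUnit_det _).mp hX)
    have hXXw : X *ᵥ (Xᵀ *ᵥ ω) = s := by
      rw [hω, Matrix.mulVec_mulVec, Matrix.mulVec_mulVec, ← hMdef, hMM, Matrix.one_mulVec]
    have hdp1 : ∀ u : Fin n → ℝ, r ⬝ᵥ (Xᵀ *ᵥ u) = s ⬝ᵥ u := by
      intro u
      rw [Matrix.dotProduct_mulVec, Matrix.vecMul_transpose, hsdef]
    have e1 : (r - Xᵀ *ᵥ ω) ⬝ᵥ (r - Xᵀ *ᵥ ω)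
        = r ⬝ᵥ r - s ⬝ᵥ (M⁻¹ *ᵥ s) := by
      rw [dotProduct_sub, sub_dotProduct, sub_dotProduct]
      have e2 : r ⬝ᵥ (Xᵀ *ᵥ ω) = s ⬝ᵥ (M⁻¹ *ᵥ s) := by rw [hdp1, hω]
      have e3 : (Xᵀ *ᵥ ω) ⬝ᵥ r = s ⬝ᵥ (M⁻¹ *ᵥ s) := by rw [dotProduct_comm, e2]
      have e4 : (Xᵀ *ᵥ ω) ⬝ᵥ (Xᵀ *ᵥ ω) = s ⬝ᵥ (M⁻¹ *ᵥ s) := by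
        rw [Matrix.dotProduct_mulVec, Matrix.vecMul_transpose, hXXw, hω]
      rw [e2, e3, e4]; ring
    rw [hgdef]
    simp only [hB0]
    rw [e1, hdp1]
  -- conclude
  rw [hg0.symm]
  have ht : Tendsto g (𝓝[>] (0:ℝ)) (𝓝 (g 0)) :=
    (hgcont.continuousWithinAt).tendsto
  refine ht.congr' ?_
  filter_upwards [self_mem_nhdsWithin] with γ hγ
  exact (heq γ hγ).symm
end

section
/- Let W be a real n×n matrix with operator norm ‖W‖ < 1, and let (ε_t)_{t∈ℤ} be an independent family of random vectors in ℝⁿ whose coordinates are i.i.d. standard Gaussian N(0,1). For t ∈ ℤ let z_t = Σ_{k≥0} Wᵏ ε_{t−k} (the almost-sure limit of the partial sums). Then for all a, b ∈ ℤ the cross-covariance matrix satisfies E[z_a z_bᵀ] = S_{b−a}, where S_q = Σ_{k≥0} W^{k+(−q)⁺}(W^{k+q⁺})ᵀ and x⁺ = max(x,0). -/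
open Matrix MeasureTheory ProbabilityTheory Real Set
open scoped Matrix.Norms.L2Operator ENNReal NNReal

lemma gpdf_nn_meas : Measurable (fun x => (gaussianPDFReal 0 1 x).toNNReal) :=
  (measurable_gaussianPDFReal 0 1).real_toNNReal

lemma gaussianReal_eq_withDensity :
    gaussianReal 0 1 = (volume : Measure ℝ).withDensity
      (fun x => ((gaussianPDFReal 0 1 x).toNNReal : ℝ≥0∞)) := by
  rw [gaussianReal_of_var_ne_zero 0 one_ne_zero]
  rfl

lemma integral_gauss (g : ℝ → ℝ) :
    ∫ x, g x ∂(gaussianReal 0 1) = ∫ x, gaussianPDFReal 0 1 x * g x := by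
  rw [gaussianReal_eq_withDensity, integral_withDensity_eq_integral_smul gpdf_nn_meas]
  congr 1
  ext x
  rw [NNReal.smul_def, Real.coe_toNNReal _ (gaussianPDFReal_nonneg 0 1 x), smul_eq_mul]

lemma gpdf_eq (x : ℝ) : gaussianPDFReal 0 1 x = (Real.sqrt (2 * π))⁻¹ * Real.exp (-(1/2) * x ^ 2) := by
  rw [gaussianPDFReal]
  norm_num
  left
  ring_nf

lemma integrable_sq_gauss : Integrable (fun x : ℝ => x ^ 2) (gaussianReal 0 1) := by
  rw [gaussianReal_eq_withDensity, integrable_withDensity_iff gpdf_nn_meas.coe_nnreal_ennreal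
    (Filter.Eventually.of_forall fun x => ENNReal.coe_lt_top)]
  have hr2 : ∀ y : ℝ, y ^ (2:ℝ) = y ^ (2:ℕ) := fun y => by
    rw [← Real.rpow_natCast y 2]; norm_num
  have h : Integrable (fun x : ℝ => x ^ (2:ℝ) * Real.exp (-(1/2) * x ^ 2)) := by
    exact integrable_rpow_mul_exp_neg_mul_sq (by norm_num) (by norm_num)
  have h2 : Integrable (fun x : ℝ => (Real.sqrt (2*π))⁻¹ * (x ^ 2 * Real.exp (-(1/2) * x ^ 2))) := by
    refine Integrable.const_mul ?_ _
    refine h.congr (Filter.Eventually.of_forall fun x => ?_)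
    simp only [hr2]
  refine h2.congr (Filter.Eventually.of_forall fun x => ?_)
  simp only [ENNReal.coe_toReal, Real.coe_toNNReal _ (gaussianPDFReal_nonneg 0 1 x)]
  rw [gpdf_eq]
  ring

lemma sq_gauss : ∫ x, x ^ 2 ∂(gaussianReal 0 1) = 1 := by
  rw [integral_gauss]
  have h1 : ∀ x : ℝ, gaussianPDFReal 0 1 x * x ^ 2
      = (Real.sqrt (2 * π))⁻¹ * (x ^ 2 * Real.exp (-(1/2) * x ^ 2)) := by
    intro x
    rw [gpdf_eq]; ring
  simp_rw [h1]
  rw [integral_const_mul]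
  have h2 : (fun x : ℝ => x ^ 2 * Real.exp (-(1/2) * x ^ 2))
      = fun x : ℝ => |x| ^ (2:ℝ) * Real.exp (-(1/2) * |x| ^ (2:ℝ)) := by
    funext x
    have hr2 : |x| ^ (2:ℝ) = |x| ^ (2:ℕ) := by
      rw [← Real.rpow_natCast |x| 2]; norm_num
    rw [hr2, sq_abs]
  rw [h2]
  rw [integral_comp_abs (f := fun t : ℝ => t ^ (2:ℝ) * Real.exp (-(1/2) * t ^ (2:ℝ)))]
  rw [integral_rpow_mul_exp_neg_mul_rpow (by norm_num) (by norm_num) (by norm_num)]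
  have hG : Real.Gamma (((2:ℝ)+1)/2) = Real.sqrt π / 2 := by
    have h : (((2:ℝ)+1)/2 : ℝ) = 1/2 + 1 := by norm_num
    rw [h, Real.Gamma_add_one (by norm_num), Real.Gamma_one_half_eq]
    ring
  have hp : ((1:ℝ)/2) ^ (-((2:ℝ)+1)/2 : ℝ) = Real.sqrt 8 := by
    rw [show ((1:ℝ)/2) = 2⁻¹ from by norm_num, ← Real.rpow_neg_one (2:ℝ)]
    rw [← Real.rpow_mul (by norm_num)]
    rw [show (-1 : ℝ) * (-((2:ℝ)+1)/2) = (3:ℕ) * (1/2 : ℝ) from by norm_num]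
    rw [Real.rpow_mul (by norm_num), Real.rpow_natCast]
    rw [← Real.sqrt_eq_rpow]
    norm_num
  rw [hG, hp]
  have h8 : Real.sqrt 8 = 2 * Real.sqrt 2 := by
    rw [show (8:ℝ) = 2^2 * 2 by norm_num, Real.sqrt_mul (by positivity), Real.sqrt_sq (by norm_num)]
  have hs2 : Real.sqrt (2*π) = Real.sqrt 2 * Real.sqrt π := Real.sqrt_mul (by norm_num) _
  rw [h8, hs2]
  have hπ : (0:ℝ) < Real.sqrt π := Real.sqrt_pos.mpr Real.pi_pos
  have h2' : (0:ℝ) < Real.sqrt 2 := Real.sqrt_pos.mpr (by norm_num)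
  field_simp

lemma integrable_id_gauss : Integrable (fun x : ℝ => x) (gaussianReal 0 1) := by
  rw [gaussianReal_eq_withDensity, integrable_withDensity_iff gpdf_nn_meas.coe_nnreal_ennreal
    (Filter.Eventually.of_forall fun x => ENNReal.coe_lt_top)]
  have h : Integrable (fun x : ℝ => x * Real.exp (-(1/2) * x ^ 2)) :=
    integrable_mul_exp_neg_mul_sq (by norm_num)
  have h2 : Integrable (fun x : ℝ => (Real.sqrt (2*π))⁻¹ * (x * Real.exp (-(1/2) * x ^ 2))) :=
    h.const_mul _
  refine h2.congr (Filter.Eventually.of_forall fun x => ?_)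
  simp only [ENNReal.coe_toReal, Real.coe_toNNReal _ (gaussianPDFReal_nonneg 0 1 x)]
  rw [gpdf_eq]
  ring

lemma mean_gauss : ∫ x, x ∂(gaussianReal 0 1) = 0 := by
  rw [integral_gauss]
  set g : ℝ → ℝ := fun x => gaussianPDFReal 0 1 x * x with hg
  have hodd : ∀ x, g (-x) = - g x := by
    intro x
    simp only [hg, gpdf_eq, neg_sq]
    ring
  have hmap : ∫ x, g x = ∫ x, g (-x) := by
    conv_lhs => rw [← Measure.map_neg_eq_self (volume : Measure ℝ)]
    exact MeasureTheory.integral_map_equiv (Homeomorph.neg ℝ).toMeasurableEquiv g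
  have : ∫ x, g x = - ∫ x, g x := by
    conv_lhs => rw [hmap]
    simp only [hodd]
    exact integral_neg g
  linarith

lemma euclid_coord_le (n : ℕ) (v : EuclideanSpace ℝ (Fin n)) (i : Fin n) : |v i| ≤ ‖v‖ := by
  rw [EuclideanSpace.norm_eq]
  rw [← Real.sqrt_sq_eq_abs]
  apply Real.sqrt_le_sqrt
  exact Finset.single_le_sum (f := fun m => ‖v m‖ ^ 2) (fun m _ => by positivity) (Finset.mem_univ i) |>.trans_eq' (by rw [Real.norm_eq_abs, sq_abs])

lemma l2_entry_le (n : ℕ) (A : Matrix (Fin n) (Fin n) ℝ) (i m : Fin n) : |A i m| ≤ ‖A‖ := by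
  have h := Matrix.l2_opNorm_mulVec A (EuclideanSpace.single m 1)
  rw [EuclideanSpace.norm_single] at h
  have h2 : ((EuclideanSpace.equiv (Fin n) ℝ).symm (A *ᵥ (EuclideanSpace.single m 1))) i
      = A i m := by
    simp [EuclideanSpace.equiv, Matrix.mulVec, dotProduct, EuclideanSpace.single_apply,
      mul_ite, Finset.sum_ite_eq]
  calc |A i m| = |((EuclideanSpace.equiv (Fin n) ℝ).symm (A *ᵥ (EuclideanSpace.single m 1))) i| := by rw [h2]
    _ ≤ ‖(EuclideanSpace.equiv (Fin n) ℝ).symm (A *ᵥ (EuclideanSpace.single m 1))‖ := euclid_coord_le n _ i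
    _ ≤ ‖A‖ := by simpa using h

lemma pow_entry_le (n : ℕ) (W : Matrix (Fin n) (Fin n) ℝ) (k : ℕ) (i m : Fin n) :
    |(W ^ k) i m| ≤ ‖W‖ ^ k := by
  cases k with
  | zero => simp [Matrix.one_apply]; split_ifs <;> norm_num
  | succ k => exact (l2_entry_le n _ i m).trans (norm_pow_le' W k.succ_pos)

/-- Let `W ∈ ℝ^{n×n}` have L2 operator norm `‖W‖ < 1`, and let
`(ε_t)_{t∈ℤ}` be random vectors in `ℝⁿ` whose coordinates, over all `t` and
positions, form an independent family of standard Gaussians `N(0,1)`.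
For `t ∈ ℤ` let `z_t = Σ_{k≥0} Wᵏ ε_{t−k}` (via `tsum`, which agrees with the
almost-sure limit of the partial sums).  Then for all `a, b ∈ ℤ` the
cross-covariance matrix satisfies, entrywise,
`E[z_a z_bᵀ] = S_{b−a}`, where `S_q = Σ_{k≥0} W^{k+(−q)⁺} (W^{k+q⁺})ᵀ` and
`x⁺ = max(x,0)` (realized via `Int.toNat`). -/
theorem esn_noise_cross_covariance
    (n : ℕ) (W : Matrix (Fin n) (Fin n) ℝ) (hW : ‖W‖ < 1)
    {Ω : Type*} [MeasurableSpace Ω] (μ : Measure Ω) [IsProbabilityMeasure μ]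
    (ε : ℤ → Ω → (Fin n → ℝ))
    (hmeas : ∀ t, Measurable (ε t))
    (hindep : iIndepFun
      (fun p : ℤ × Fin n => fun ω => ε p.1 ω p.2) μ)
    (hgauss : ∀ t i, μ.map (fun ω => ε t ω i) = gaussianReal 0 1)
    (z : ℤ → Ω → (Fin n → ℝ))
    (hz : ∀ t ω, z t ω = ∑' k : ℕ, W ^ k *ᵥ ε (t - k) ω) :
    ∀ a b : ℤ, ∀ i j : Fin n,
      ∫ ω, z a ω i * z b ω j ∂μ =
        (∑' k : ℕ, W ^ (k + (-(b - a)).toNat) * (W ^ (k + (b - a).toNat))ᵀ) i j := by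
  -- basic facts about the coordinates
  set r : ℝ := ‖W‖ with hr
  have hr0 : 0 ≤ r := norm_nonneg W
  have hgeo : Summable fun k : ℕ => r ^ k := summable_geometric_of_lt_one hr0 hW
  have hXm : ∀ (s : ℤ) (m : Fin n), Measurable fun ω => ε s ω m :=
    fun s m => (measurable_pi_apply m).comp (hmeas s)
  have hXint : ∀ (s : ℤ) (m : Fin n), Integrable (fun ω => ε s ω m) μ := by
    intro s m
    have := (integrable_map_measure (μ := μ) (f := fun ω => ε s ω m) (g := fun x : ℝ => x)
      aestronglyMeasurable_id (hXm s m).aemeasurable)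
    rw [hgauss s m] at this
    exact this.mp integrable_id_gauss
  have hXsq_int : ∀ (s : ℤ) (m : Fin n), Integrable (fun ω => (ε s ω m) ^ 2) μ := by
    intro s m
    have := (integrable_map_measure (μ := μ) (f := fun ω => ε s ω m) (g := fun x : ℝ => x ^ 2)
      (by fun_prop) (hXm s m).aemeasurable)
    rw [hgauss s m] at this
    exact this.mp integrable_sq_gauss
  have hXsq : ∀ (s : ℤ) (m : Fin n), ∫ ω, (ε s ω m) ^ 2 ∂μ = 1 := by
    intro s m
    have := integral_map (μ := μ) (φ := fun ω => ε s ω m) (f := fun x : ℝ => x ^ 2)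
      (hXm s m).aemeasurable (by rw [hgauss s m]; fun_prop)
    rw [hgauss s m, sq_gauss] at this
    exact this.symm
  have hXmean : ∀ (s : ℤ) (m : Fin n), ∫ ω, ε s ω m ∂μ = 0 := by
    intro s m
    have := integral_map (μ := μ) (φ := fun ω => ε s ω m) (f := fun x : ℝ => x)
      (hXm s m).aemeasurable (by rw [hgauss s m]; exact aestronglyMeasurable_id)
    rw [hgauss s m, mean_gauss] at this
    exact this.symm
  -- products of coordinates
  have hprod_int : ∀ (s t : ℤ) (m p : Fin n),
      Integrable (fun ω => ε s ω m * ε t ω p) μ := by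
    intro s t m p
    refine Integrable.mono' (((hXsq_int s m).div_const 2).add ((hXsq_int t p).div_const 2))
      (((hXm s m).mul (hXm t p)).aestronglyMeasurable) ?_
    refine Filter.Eventually.of_forall fun ω => ?_
    simp only [Pi.add_apply, Real.norm_eq_abs, abs_mul]
    nlinarith [sq_nonneg (|ε s ω m| - |ε t ω p|), sq_abs (ε s ω m), sq_abs (ε t ω p),
      abs_nonneg (ε s ω m), abs_nonneg (ε t ω p)]
  have habs_le : ∀ (s t : ℤ) (m p : Fin n), ∫ ω, |ε s ω m * ε t ω p| ∂μ ≤ 1 := by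
    intro s t m p
    have hb : ∀ ω, |ε s ω m * ε t ω p| ≤ (ε s ω m) ^ 2 / 2 + (ε t ω p) ^ 2 / 2 := by
      intro ω
      rw [abs_mul]
      nlinarith [sq_nonneg (|ε s ω m| - |ε t ω p|), sq_abs (ε s ω m), sq_abs (ε t ω p),
        abs_nonneg (ε s ω m), abs_nonneg (ε t ω p)]
    calc ∫ ω, |ε s ω m * ε t ω p| ∂μ
        ≤ ∫ ω, ((ε s ω m) ^ 2 / 2 + (ε t ω p) ^ 2 / 2) ∂μ :=
          integral_mono (hprod_int s t m p).abs
            (((hXsq_int s m).div_const 2).add ((hXsq_int t p).div_const 2)) hb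
      _ = 1 := by
          rw [integral_add ((hXsq_int s m).div_const 2) ((hXsq_int t p).div_const 2),
            integral_div, integral_div, hXsq, hXsq]
          norm_num
  have key : ∀ (s t : ℤ) (m p : Fin n),
      ∫ ω, ε s ω m * ε t ω p ∂μ = if s = t ∧ m = p then 1 else 0 := by
    intro s t m p
    by_cases h : s = t ∧ m = p
    · obtain ⟨h1, h2⟩ := h
      subst h1; subst h2
      rw [if_pos ⟨rfl, rfl⟩]
      simpa [sq] using hXsq s m
    · rw [if_neg h]
      have hne : (s, m) ≠ (t, p) := by
        intro hc
        exact h ⟨congrArg Prod.fst hc, congrArg Prod.snd hc⟩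
      have hind : IndepFun (fun ω => ε s ω m) (fun ω => ε t ω p) μ := hindep.indepFun hne
      have h2 := hind.integral_mul_eq_mul_integral (hXm s m).aestronglyMeasurable (hXm t p).aestronglyMeasurable
      calc ∫ ω, ε s ω m * ε t ω p ∂μ
          = (∫ ω, ε s ω m ∂μ) * ∫ ω, ε t ω p ∂μ := h2
        _ = 0 := by rw [hXmean, zero_mul]
  -- a.e. summability of the series coordinates
  have habs1 : ∀ (s : ℤ) (m : Fin n), ∫ ω, |ε s ω m| ∂μ ≤ 1 := by
    intro s m
    calc ∫ ω, |ε s ω m| ∂μ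
        ≤ ∫ ω, ((ε s ω m) ^ 2 / 2 + 1 / 2) ∂μ := by
          refine integral_mono (hXint s m).abs
            (((hXsq_int s m).div_const 2).add (integrable_const _)) fun ω => ?_
          nlinarith [sq_nonneg (|ε s ω m| - 1), sq_abs (ε s ω m), abs_nonneg (ε s ω m)]
      _ = 1 := by
          rw [integral_add ((hXsq_int s m).div_const 2) (integrable_const _),
            integral_div, hXsq, integral_const]
          simp
          norm_num
  have hA : ∀ t : ℤ, ∀ᵐ ω ∂μ, ∀ i : Fin n,
      Summable fun k : ℕ => |(W ^ k *ᵥ ε (t - k) ω) i| := by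
    intro t
    set h : ℕ → Ω → ℝ := fun k ω => r ^ k * ∑ m : Fin n, |ε (t - k) ω m| with hh
    have hint : ∀ k, Integrable (h k) μ := fun k =>
      (integrable_finset_sum _ fun m _ => (hXint (t - k) m).abs).const_mul _
    have hnonneg : ∀ k ω, 0 ≤ h k ω := by
      intro k ω
      have : 0 ≤ ∑ m : Fin n, |ε (t - k) ω m| :=
        Finset.sum_nonneg fun m _ => abs_nonneg _
      positivity
    have hmeas' : ∀ k, Measurable fun ω => ENNReal.ofReal (h k ω) := by
      intro k
      exact (measurable_const.mul
        (Finset.measurable_sum _ fun m _ => (hXm (t - k) m).abs)).ennreal_ofReal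
    have hval : ∀ k, ∫ ω, h k ω ∂μ ≤ (n : ℝ) * r ^ k := by
      intro k
      rw [hh]
      simp only
      rw [integral_const_mul, integral_finset_sum _ (fun m _ => (hXint (t - k) m).abs)]
      have : ∑ m : Fin n, ∫ ω, |ε (t - k) ω m| ∂μ ≤ ∑ m : Fin n, (1:ℝ) :=
        Finset.sum_le_sum fun m _ => habs1 (t - k) m
      calc r ^ k * ∑ m : Fin n, ∫ ω, |ε (t - k) ω m| ∂μ
          ≤ r ^ k * ∑ m : Fin n, (1:ℝ) := by
            exact mul_le_mul_of_nonneg_left this (pow_nonneg hr0 k)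
        _ = (n : ℝ) * r ^ k := by simp [mul_comm]
    have hlt : ∫⁻ ω, ∑' k, ENNReal.ofReal (h k ω) ∂μ < ⊤ := by
      rw [lintegral_tsum fun k => (hmeas' k).aemeasurable]
      have hle : ∀ k : ℕ, ∫⁻ ω, ENNReal.ofReal (h k ω) ∂μ
          ≤ ENNReal.ofReal (n : ℝ) * ENNReal.ofReal r ^ k := by
        intro k
        rw [← ofReal_integral_eq_lintegral_ofReal (hint k)
          (Filter.Eventually.of_forall (hnonneg k))]
        calc ENNReal.ofReal (∫ ω, h k ω ∂μ) ≤ ENNReal.ofReal ((n : ℝ) * r ^ k) :=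
            ENNReal.ofReal_le_ofReal (hval k)
          _ = ENNReal.ofReal (n : ℝ) * ENNReal.ofReal r ^ k := by
            rw [ENNReal.ofReal_mul (by positivity), ENNReal.ofReal_pow hr0]
      calc ∑' k, ∫⁻ ω, ENNReal.ofReal (h k ω) ∂μ
          ≤ ∑' k, ENNReal.ofReal (n : ℝ) * ENNReal.ofReal r ^ k := ENNReal.tsum_le_tsum hle
        _ = ENNReal.ofReal (n : ℝ) * ∑' k, ENNReal.ofReal r ^ k := ENNReal.tsum_mul_left
        _ < ⊤ := by
            rw [ENNReal.tsum_geometric]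
            refine ENNReal.mul_lt_top ENNReal.ofReal_lt_top ?_
            have h01 : ENNReal.ofReal r < 1 := ENNReal.ofReal_lt_one.mpr hW
            rw [ENNReal.inv_lt_top]
            exact tsub_pos_of_lt h01
    have hae := ae_lt_top' (AEMeasurable.ennreal_tsum fun k => (hmeas' k).aemeasurable) hlt.ne
    filter_upwards [hae] with ω hω
    have hsum : Summable fun k => h k ω := by
      have h1 : ∑' k, (((h k ω).toNNReal : ℝ≥0) : ℝ≥0∞) ≠ ⊤ := by
        exact hω.ne
      have h2 := ENNReal.tsum_coe_ne_top_iff_summable_coe.mp h1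
      exact h2.congr fun k => Real.coe_toNNReal _ (hnonneg k ω)
    intro i'
    refine Summable.of_nonneg_of_le (fun k => abs_nonneg _) (fun k => ?_) hsum
    calc |(W ^ k *ᵥ ε (t - k) ω) i'|
        = |∑ m : Fin n, (W ^ k) i' m * ε (t - k) ω m| := rfl
      _ ≤ ∑ m : Fin n, |(W ^ k) i' m * ε (t - k) ω m| := Finset.abs_sum_le_sum_abs _ _
      _ ≤ ∑ m : Fin n, r ^ k * |ε (t - k) ω m| := by
          refine Finset.sum_le_sum fun m _ => ?_
          rw [abs_mul]
          exact mul_le_mul_of_nonneg_right (pow_entry_le n W k i' m) (abs_nonneg _)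
      _ = h k ω := by rw [hh]; simp [Finset.mul_sum]
  intro a b i j
  -- the two series
  set f : ℕ → Ω → ℝ := fun k ω => (W ^ k *ᵥ ε (a - k) ω) i with hf
  set g : ℕ → Ω → ℝ := fun l ω => (W ^ l *ᵥ ε (b - l) ω) j with hgdef
  have hzz : ∀ᵐ ω ∂μ, z a ω i * z b ω j = ∑' kl : ℕ × ℕ, f kl.1 ω * g kl.2 ω := by
    filter_upwards [hA a, hA b] with ω hsa hsb
    have hza : z a ω i = ∑' k : ℕ, f k ω := by
      rw [hz]
      exact tsum_apply (Pi.summable.mpr fun i' =>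
        Summable.of_norm (by simpa [Real.norm_eq_abs] using hsa i'))
    have hzb : z b ω j = ∑' l : ℕ, g l ω := by
      rw [hz]
      exact tsum_apply (Pi.summable.mpr fun j' =>
        Summable.of_norm (by simpa [Real.norm_eq_abs] using hsb j'))
    rw [hza, hzb]
    exact tsum_mul_tsum_of_summable_norm
      (by simpa [Real.norm_eq_abs] using hsa i) (by simpa [Real.norm_eq_abs] using hsb j)
  -- integrability and integral of each term
  have hfg_expand : ∀ (k l : ℕ) (ω : Ω), f k ω * g l ω =
      ∑ m : Fin n, ∑ p : Fin n,
        ((W ^ k) i m * (W ^ l) j p) * (ε (a - k) ω m * ε (b - l) ω p) := by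
    intro k l ω
    simp only [hf, hgdef, Matrix.mulVec, dotProduct]
    rw [Finset.sum_mul_sum]
    refine Finset.sum_congr rfl fun m _ => Finset.sum_congr rfl fun p _ => by ring
  have hFint : ∀ kl : ℕ × ℕ, Integrable (fun ω => f kl.1 ω * g kl.2 ω) μ := by
    rintro ⟨k, l⟩
    have hint : Integrable (fun ω => ∑ m : Fin n, ∑ p : Fin n,
        ((W ^ k) i m * (W ^ l) j p) * (ε (a - k) ω m * ε (b - l) ω p)) μ := by
      apply integrable_finset_sum
      intro m _
      apply integrable_finset_sum
      intro p _
      exact (hprod_int (a - k) (b - l) m p).const_mul _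
    exact hint.congr (Filter.Eventually.of_forall fun ω => (hfg_expand k l ω).symm)
  have hFnorm : ∀ kl : ℕ × ℕ, ∫ ω, ‖f kl.1 ω * g kl.2 ω‖ ∂μ ≤ (n : ℝ) ^ 2 * (r ^ kl.1 * r ^ kl.2) := by
    rintro ⟨k, l⟩
    have hintb : ∀ (m : Fin n), ∀ _ : m ∈ Finset.univ, Integrable (fun ω => ∑ p : Fin n,
        |(W ^ k) i m| * |(W ^ l) j p| * |ε (a - k) ω m * ε (b - l) ω p|) μ := by
      intro m _
      apply integrable_finset_sum
      intro p _
      have : Integrable (fun ω => |(W ^ k) i m| * |(W ^ l) j p| *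
          |ε (a - k) ω m * ε (b - l) ω p|) μ := by
        simp only [mul_assoc]
        exact ((hprod_int (a - k) (b - l) m p).abs.const_mul _).const_mul _
      exact this
    have hb1 : ∀ ω, ‖f k ω * g l ω‖ ≤ ∑ m : Fin n, ∑ p : Fin n,
        |(W ^ k) i m| * |(W ^ l) j p| * |ε (a - k) ω m * ε (b - l) ω p| := by
      intro ω
      rw [Real.norm_eq_abs, hfg_expand k l ω]
      refine (Finset.abs_sum_le_sum_abs _ _).trans (Finset.sum_le_sum fun m _ => ?_)
      refine (Finset.abs_sum_le_sum_abs _ _).trans (Finset.sum_le_sum fun p _ => ?_)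
      rw [abs_mul, abs_mul]
    calc ∫ ω, ‖f k ω * g l ω‖ ∂μ
        ≤ ∫ ω, ∑ m : Fin n, ∑ p : Fin n,
            |(W ^ k) i m| * |(W ^ l) j p| * |ε (a - k) ω m * ε (b - l) ω p| ∂μ :=
          integral_mono (hFint ⟨k, l⟩).norm (integrable_finset_sum _ hintb) hb1
      _ = ∑ m : Fin n, ∑ p : Fin n,
            |(W ^ k) i m| * |(W ^ l) j p| * ∫ ω, |ε (a - k) ω m * ε (b - l) ω p| ∂μ := by
          rw [integral_finset_sum _ hintb]
          refine Finset.sum_congr rfl fun m _ => ?_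
          rw [integral_finset_sum _ (fun p _ => by
            simp only [mul_assoc]
            exact ((hprod_int (a - k) (b - l) m p).abs.const_mul _).const_mul _)]
          refine Finset.sum_congr rfl fun p _ => ?_
          simp only [mul_assoc]
          rw [integral_const_mul, integral_const_mul]
      _ ≤ ∑ m : Fin n, ∑ p : Fin n, r ^ k * r ^ l * 1 := by
          refine Finset.sum_le_sum fun m _ => Finset.sum_le_sum fun p _ => ?_
          have h1 := pow_entry_le n W k i m
          have h2 := pow_entry_le n W l j p
          have h3 := habs_le (a - k) (b - l) m p
          have h4 : (0:ℝ) ≤ ∫ ω, |ε (a - k) ω m * ε (b - l) ω p| ∂μ :=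
            integral_nonneg fun ω => abs_nonneg _
          exact mul_le_mul (mul_le_mul h1 h2 (abs_nonneg _) (pow_nonneg hr0 k)) h3 h4
            (by positivity)
      _ = (n : ℝ) ^ 2 * (r ^ k * r ^ l) := by
          simp [Finset.sum_const, Finset.card_univ]
          ring
  have hFsum : Summable fun kl : ℕ × ℕ => ∫ ω, ‖f kl.1 ω * g kl.2 ω‖ ∂μ := by
    refine Summable.of_nonneg_of_le (fun kl => integral_nonneg fun ω => norm_nonneg _)
      hFnorm ?_
    exact ((hgeo.mul_of_nonneg hgeo (fun k => by positivity) fun k => by positivity).mul_left _)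
  have hFval : ∀ kl : ℕ × ℕ, ∫ ω, f kl.1 ω * g kl.2 ω ∂μ =
      if (a - kl.1 : ℤ) = b - kl.2 then (W ^ kl.1 * (W ^ kl.2)ᵀ) i j else 0 := by
    rintro ⟨k, l⟩
    have hstep : ∫ ω, f k ω * g l ω ∂μ = ∑ m : Fin n, ∑ p : Fin n,
        ((W ^ k) i m * (W ^ l) j p) * ∫ ω, ε (a - k) ω m * ε (b - l) ω p ∂μ := by
      rw [integral_congr_ae (Filter.Eventually.of_forall (hfg_expand k l))]
      rw [integral_finset_sum _ (fun m _ => integrable_finset_sum _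
        (fun p _ => (hprod_int (a - k) (b - l) m p).const_mul _))]
      refine Finset.sum_congr rfl fun m _ => ?_
      rw [integral_finset_sum _ (fun p _ => (hprod_int (a - k) (b - l) m p).const_mul _)]
      exact Finset.sum_congr rfl fun p _ => integral_const_mul _ _
    rw [hstep]
    simp only [key]
    by_cases hq : (a - k : ℤ) = b - l
    · rw [if_pos hq]
      simp only [hq, true_and, mul_ite, mul_one, mul_zero]
      rw [Matrix.mul_apply]
      refine Finset.sum_congr rfl fun m _ => ?_
      rw [Finset.sum_ite_eq Finset.univ m fun p => (W ^ k) i m * (W ^ l) j p]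
      simp [Matrix.transpose_apply]
    · rw [if_neg hq]
      simp [hq]
  -- put it together
  have hmain : ∫ ω, z a ω i * z b ω j ∂μ =
      ∑' kl : ℕ × ℕ, (if (a - kl.1 : ℤ) = b - kl.2 then (W ^ kl.1 * (W ^ kl.2)ᵀ) i j else 0) := by
    rw [integral_congr_ae hzz,
      ← integral_tsum_of_summable_integral_norm hFint hFsum]
    exact tsum_congr hFval
  rw [hmain]
  -- reindex
  have hreindex : (∑' kl : ℕ × ℕ,
      (if (a - kl.1 : ℤ) = b - kl.2 then (W ^ kl.1 * (W ^ kl.2)ᵀ) i j else 0)) =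
      ∑' k : ℕ, (W ^ (k + (-(b - a)).toNat) * (W ^ (k + (b - a).toNat))ᵀ) i j := by
    set c1 := (-(b - a)).toNat with hc1
    set c2 := (b - a).toNat with hc2
    have hcc : (c2 : ℤ) - c1 = b - a := by omega
    refine tsum_eq_tsum_of_ne_zero_bij (fun x => ((x : ℕ) + c1, (x : ℕ) + c2)) ?_ ?_ ?_
    · intro x y hxy
      have h1 : (x : ℕ) + c1 = (y : ℕ) + c1 := congrArg Prod.fst hxy
      exact Subtype.ext (by omega)
    · rintro ⟨k, l⟩ hkl
      have hcond : (a - k : ℤ) = b - l := by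
        by_contra hc
        simp only [Function.mem_support, if_neg hc] at hkl
        exact hkl rfl
      have hval : (W ^ k * (W ^ l)ᵀ) i j ≠ 0 := by
        simpa only [Function.mem_support, if_pos hcond] using hkl
      have hk : k = (k - c1) + c1 := by omega
      have hl : l = (k - c1) + c2 := by omega
      refine ⟨⟨k - c1, ?_⟩, ?_⟩
      · simp only [Function.mem_support]
        rw [← hk, ← hl]
        exact hval
      · simp only
        rw [← hk, ← hl]
    · rintro ⟨x, hx⟩
      simp only
      rw [if_pos (by omega)]
  rw [hreindex]
  -- matrix tsum entry
  have hMsum : ∀ (i' j' : Fin n),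
      Summable fun k : ℕ => (W ^ (k + (-(b - a)).toNat) * (W ^ (k + (b - a).toNat))ᵀ) i' j' := by
    intro i' j'
    set c1 := (-(b - a)).toNat
    set c2 := (b - a).toNat
    refine Summable.of_norm ?_
    refine Summable.of_nonneg_of_le (fun k => norm_nonneg _) (fun k => ?_) (hgeo.mul_left (n : ℝ))
    rw [Real.norm_eq_abs, Matrix.mul_apply]
    calc |∑ m : Fin n, (W ^ (k + c1)) i' m * (W ^ (k + c2))ᵀ m j'|
        ≤ ∑ m : Fin n, |(W ^ (k + c1)) i' m * (W ^ (k + c2))ᵀ m j'| :=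
          Finset.abs_sum_le_sum_abs _ _
      _ ≤ ∑ m : Fin n, r ^ k * 1 := by
          refine Finset.sum_le_sum fun m _ => ?_
          rw [abs_mul, Matrix.transpose_apply]
          have h1 : |(W ^ (k + c1)) i' m| ≤ r ^ (k + c1) := pow_entry_le n W _ i' m
          have h2 : |(W ^ (k + c2)) j' m| ≤ r ^ (k + c2) := pow_entry_le n W _ j' m
          have h3 : r ^ (k + c1) ≤ r ^ k := pow_le_pow_of_le_one hr0 hW.le (Nat.le_add_right _ _)
          have h4 : r ^ (k + c2) ≤ 1 := by
            simpa using pow_le_pow_of_le_one hr0 hW.le (Nat.zero_le (k + c2))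
          exact mul_le_mul (h1.trans h3) (h2.trans h4) (abs_nonneg _) (pow_nonneg hr0 k)
      _ ≤ (n : ℝ) * r ^ k := by
          simp [Finset.sum_const, Finset.card_univ]
  have e1 := tsum_apply (x := i) (Pi.summable.mpr fun i' => Pi.summable.mpr fun j' => hMsum i' j')
  have e2 := tsum_apply (x := j) (Pi.summable.mpr fun j' => hMsum i j')
  exact ((congrFun e1 j).trans e2).symm
end

section
/- Let D ∈ ℝ^{T×T} be symmetric positive definite, U ∈ ℝ^{T×T} arbitrary, b ∈ ℝ^T, and η > 0. Then bᵀ U ( I_T + η⁻² Uᵀ D U )⁻¹ Uᵀ b ≤ η² · bᵀ D⁻¹ b. Consequently, for a task r = √T Uᵀ b the asymptotic training MSE (1−c)·bᵀU(I_T + η⁻²UᵀDU)⁻¹Uᵀb is at most (1−c)η² bᵀD⁻¹b and vanishes as η → 0. -/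
open Matrix

section Aux

variable {T : ℕ}

lemma posDef_smul_aux {D : Matrix (Fin T) (Fin T) ℝ} (hD : D.PosDef) {c : ℝ} (hc : 0 < c) :
    (c • D).PosDef := by
  refine ⟨?_, fun x hx => ?_⟩
  · unfold Matrix.IsHermitian
    rw [conjTranspose_smul, hD.1]
    simp
  · simpa [Finsupp.mul_sum, mul_assoc, mul_left_comm] using mul_pos hc (hD.2 hx)

end Aux

/-- Let `D ∈ ℝ^{T×T}` be symmetric positive definite, `U ∈ ℝ^{T×T}` arbitrary,
`b ∈ ℝ^T` and `η > 0`.  Then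
`bᵀ U (I_T + η⁻² Uᵀ D U)⁻¹ Uᵀ b ≤ η² · bᵀ D⁻¹ b`.
Consequently, for a task `r = √T Uᵀ b` the asymptotic training MSE
`(1−c) · bᵀ U (I_T + η⁻² Uᵀ D U)⁻¹ Uᵀ b` is at most `(1−c) η² bᵀ D⁻¹ b` and
vanishes as `η → 0`. -/
theorem training_mse_bound_delay_task
    (T : ℕ)
    (D : Matrix (Fin T) (Fin T) ℝ) (hD : D.PosDef)
    (U : Matrix (Fin T) (Fin T) ℝ) (b : Fin T → ℝ)
    (η : ℝ) (hη : 0 < η) :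
    b ⬝ᵥ ((U * ((1 : Matrix (Fin T) (Fin T) ℝ) + (η ^ 2)⁻¹ • (Uᵀ * D * U))⁻¹ * Uᵀ) *ᵥ b) ≤
      η ^ 2 * (b ⬝ᵥ (D⁻¹ *ᵥ b)) := by
  have hc : (0:ℝ) < (η ^ 2)⁻¹ := by positivity
  set X : Matrix (Fin T) (Fin T) ℝ := (η ^ 2)⁻¹ • D with hXdef
  have hXpd : X.PosDef := posDef_smul_aux hD hc
  have hXsymm : Xᵀ = X := hXpd.1
  -- N = 1 + Uᵀ X U
  set N : Matrix (Fin T) (Fin T) ℝ :=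
    (1 : Matrix (Fin T) (Fin T) ℝ) + (η ^ 2)⁻¹ • (Uᵀ * D * U) with hNdef
  have hNeq : N = 1 + Uᵀ * X * U := by
    rw [hNdef, hXdef]
    congr 1
    rw [Matrix.mul_smul, Matrix.smul_mul]
  have hUXU : (Uᵀ * X * U).PosSemidef := by
    have := hXpd.posSemidef.conjTranspose_mul_mul_same (R := ℝ) U
    simpa using this
  have hNpd : N.PosDef := by
    rw [hNeq]
    exact (Matrix.PosDef.one (n := Fin T) (R := ℝ)).add_posSemidef hUXU
  have hNdet : IsUnit N.det := isUnit_iff_ne_zero.mpr (ne_of_gt hNpd.det_pos)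
  have hNinv : N * N⁻¹ = 1 := Matrix.mul_nonsing_inv N hNdet
  -- S = X + X U Uᵀ X
  set S : Matrix (Fin T) (Fin T) ℝ := X + X * U * Uᵀ * X with hSdef
  have hSpd : S.PosDef := by
    have h2 : (X * U * Uᵀ * X).PosSemidef := by
      have := (Matrix.PosSemidef.one (n := Fin T) (R := ℝ)).mul_mul_conjTranspose_same (X * U)
      have e : (X * U) * 1 * (X * U)ᴴ = X * U * Uᵀ * X := by
        rw [Matrix.mul_one]
        simp [Matrix.conjTranspose_mul, Matrix.mul_assoc, hXsymm]
      rwa [e] at this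
    exact hXpd.add_posSemidef h2
  -- the key identity: S * (X⁻¹ - U N⁻¹ Uᵀ) = 1
  have hXdet : IsUnit X.det := isUnit_iff_ne_zero.mpr (ne_of_gt hXpd.det_pos)
  have hXinv : X * X⁻¹ = 1 := Matrix.mul_nonsing_inv X hXdet
  have hkey : S * (X⁻¹ - U * N⁻¹ * Uᵀ) = 1 := by
    have expand : S * (X⁻¹ - U * N⁻¹ * Uᵀ)
        = 1 + X * U * ((Uᵀ - N * (N⁻¹ * Uᵀ))) := by
      rw [hSdef, hNeq]
      noncomm_ring [Matrix.mul_assoc, hXinv,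
        (by rw [← Matrix.mul_assoc, hXinv, Matrix.one_mul] : X * (X⁻¹ * (U * (N⁻¹ * Uᵀ))) = U * (N⁻¹ * Uᵀ))]
    rw [expand, ← Matrix.mul_assoc, hNinv, Matrix.one_mul, sub_self, Matrix.mul_zero, add_zero]
  have hSinv : X⁻¹ - U * N⁻¹ * Uᵀ = S⁻¹ := (Matrix.inv_eq_right_inv hkey).symm
  have hSinvpsd : (S⁻¹).PosSemidef := hSpd.inv.posSemidef
  have hnn : 0 ≤ b ⬝ᵥ ((X⁻¹ - U * N⁻¹ * Uᵀ) *ᵥ b) := by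
    rw [hSinv]
    simpa using hSinvpsd.dotProduct_mulVec_nonneg b
  have hXinvb : b ⬝ᵥ (X⁻¹ *ᵥ b) = η ^ 2 * (b ⬝ᵥ (D⁻¹ *ᵥ b)) := by
    have hη2 : (η ^ 2)⁻¹ ≠ 0 := ne_of_gt hc
    have : Invertible ((η ^ 2)⁻¹ : ℝ) := invertibleOfNonzero hη2
    have hDdet : IsUnit D.det := isUnit_iff_ne_zero.mpr (ne_of_gt hD.det_pos)
    rw [hXdef, Matrix.inv_smul (A := D) ((η ^ 2)⁻¹) hDdet]
    rw [smul_mulVec, dotProduct_smul, smul_eq_mul]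
    congr 1
    simp [invOf_eq_inv]
  rw [Matrix.sub_mulVec, dotProduct_sub, sub_nonneg] at hnn
  calc b ⬝ᵥ ((U * N⁻¹ * Uᵀ) *ᵥ b) ≤ b ⬝ᵥ (X⁻¹ *ᵥ b) := hnn
    _ = η ^ 2 * (b ⬝ᵥ (D⁻¹ *ᵥ b)) := hXinvb
end

section
/- Let Z be a real n×n orthogonal matrix (ZᵀZ = I_n), σ ∈ [0,1), W = σZ, and S₀ = Σ_{k≥0} Wᵏ(Wᵏ)ᵀ. Then S₀ = (1 − σ²)⁻¹ I_n, and for every m ∈ ℝⁿ and every τ ∈ ℕ, the generalized Fisher-memory coefficient satisfies mᵀ (Wᵗᵃᵘ)ᵀ S₀⁻¹ Wᵗᵃᵘ m = (1 − σ²) σ^{2τ} ‖m‖²; in particular for ‖m‖ = 1 it equals (1 − σ²)σ^{2τ}. -/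
open Matrix

/-- Let `Z ∈ ℝ^{n×n}` be orthogonal (`Zᵀ Z = I_n`), `σ ∈ [0,1)`, `W = σ Z`,
and `S₀ = Σ_{k≥0} Wᵏ(Wᵏ)ᵀ`.  Then `S₀ = (1 − σ²)⁻¹ I_n`, and for every
`m ∈ ℝⁿ` and every `τ ∈ ℕ` the generalized Fisher-memory coefficient
satisfies `mᵀ (Wᵗ)ᵀ S₀⁻¹ Wᵗ m = (1 − σ²) σ^{2τ} ‖m‖²` (with `t = τ`); in
particular for `‖m‖ = 1` it equals `(1 − σ²) σ^{2τ}`.  Here `‖m‖² = m ⬝ᵥ m`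
is the squared Euclidean norm. -/
theorem haar_fisher_memory_coefficient
    (n : ℕ) (Z : Matrix (Fin n) (Fin n) ℝ) (hZ : Zᵀ * Z = 1)
    (σ : ℝ) (hσ0 : 0 ≤ σ) (hσ1 : σ < 1)
    (W : Matrix (Fin n) (Fin n) ℝ) (hW : W = σ • Z) :
    (∑' k : ℕ, W ^ k * (W ^ k)ᵀ) = (1 - σ ^ 2)⁻¹ • (1 : Matrix (Fin n) (Fin n) ℝ) ∧
      ∀ (m : Fin n → ℝ) (τ : ℕ),
        m ⬝ᵥ (((W ^ τ)ᵀ * (∑' k : ℕ, W ^ k * (W ^ k)ᵀ)⁻¹ * W ^ τ) *ᵥ m) =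
          (1 - σ ^ 2) * σ ^ (2 * τ) * (m ⬝ᵥ m) := by
  have hZZ : Z * Zᵀ = 1 := mul_eq_one_comm.mp hZ
  have hpow1 : ∀ k : ℕ, (Z ^ k) * (Z ^ k)ᵀ = 1 := by
    intro k
    induction k with
    | zero => simp
    | succ k ih =>
      rw [pow_succ, transpose_mul]
      calc Z ^ k * Z * (Zᵀ * (Z ^ k)ᵀ) = Z ^ k * (Z * Zᵀ) * (Z ^ k)ᵀ := by
            noncomm_ring
        _ = 1 := by rw [hZZ, mul_one, ih]
  have hpow2 : ∀ k : ℕ, (Z ^ k)ᵀ * (Z ^ k) = 1 := fun k =>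
    mul_eq_one_comm.mp (hpow1 k)
  have hσ2 : σ ^ 2 < 1 := by nlinarith
  have hne : (1 : ℝ) - σ ^ 2 ≠ 0 := by nlinarith
  have hWk : ∀ k : ℕ, W ^ k = σ ^ k • Z ^ k := by
    intro k; rw [hW, smul_pow]
  have hterm : ∀ k : ℕ, W ^ k * (W ^ k)ᵀ = (σ ^ 2) ^ k • (1 : Matrix (Fin n) (Fin n) ℝ) := by
    intro k
    rw [hWk, transpose_smul, smul_mul, Matrix.mul_smul, hpow1, smul_smul]
    congr 1
    rw [← pow_add, ← two_mul, pow_mul]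
  have hsummable : Summable (fun k : ℕ => (σ ^ 2) ^ k) :=
    summable_geometric_of_lt_one (by positivity) hσ2
  have hS : (∑' k : ℕ, W ^ k * (W ^ k)ᵀ) = (1 - σ ^ 2)⁻¹ • (1 : Matrix (Fin n) (Fin n) ℝ) := by
    calc (∑' k : ℕ, W ^ k * (W ^ k)ᵀ)
        = ∑' k : ℕ, (σ ^ 2) ^ k • (1 : Matrix (Fin n) (Fin n) ℝ) := by
          exact tsum_congr hterm
      _ = (∑' k : ℕ, (σ ^ 2) ^ k) • (1 : Matrix (Fin n) (Fin n) ℝ) :=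
          Summable.tsum_smul_const hsummable 1
      _ = (1 - σ ^ 2)⁻¹ • (1 : Matrix (Fin n) (Fin n) ℝ) := by
          rw [tsum_geometric_of_lt_one (by positivity) hσ2]
  refine ⟨hS, fun m τ => ?_⟩
  have hinv : ((1 - σ ^ 2)⁻¹ • (1 : Matrix (Fin n) (Fin n) ℝ))⁻¹
      = (1 - σ ^ 2) • (1 : Matrix (Fin n) (Fin n) ℝ) := by
    apply Matrix.inv_eq_right_inv
    rw [smul_mul, Matrix.mul_smul, one_mul, smul_smul, inv_mul_cancel₀ hne, one_smul]
  rw [hS, hinv]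
  have : (W ^ τ)ᵀ * ((1 - σ ^ 2) • (1 : Matrix (Fin n) (Fin n) ℝ)) * W ^ τ
      = ((1 - σ ^ 2) * σ ^ (2 * τ)) • (1 : Matrix (Fin n) (Fin n) ℝ) := by
    rw [hWk, transpose_smul]
    simp only [smul_mul, Matrix.mul_smul, mul_one, hpow2, smul_smul]
    rw [show σ ^ τ * ((1 - σ ^ 2) * σ ^ τ) = (1 - σ ^ 2) * σ ^ (2 * τ) by rw [pow_mul]; ring]
  rw [this, smul_mulVec, one_mulVec, dotProduct_smul, smul_eq_mul]
end
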